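/- For the compound Poisson-geometric family with α > 0, q ∈ (0,1), the Taylor's law exponent b = 1 + log(1 + α/q)/log(αp/q) (with p = 1-q) satisfies: b diverges exactly when q = α/(1+α); and the unique zero q₀ ∈ (0,1) of f(q) = (1+α)q² - qα(1-α) - α² satisfies q₀ > α/(1+α). -/

import Mathlib

/-- For the compound Poisson-geometric family with α > 0, q ∈ (0,1), p = 1-q:
the Taylor's law exponent b = 1 + log(1+α/q)/log(αp/q) diverges exactly when
μ = αp/q = 1, i.e. q = α/(1+α); and the quadratic f(q) = (1+α)q² - qα(1-α) - α²
has a unique zero q₀ in (0,1), which satisfies q₀ > α/(1+α). -/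
theorem compound_poisson_geometric_exponent (α : ℝ) (hα : 0 < α) :
    (∀ q ∈ Set.Ioo (0 : ℝ) 1, α * (1 - q) / q = 1 ↔ q = α / (1 + α)) ∧
    ∃ q₀ : ℝ, (q₀ ∈ Set.Ioo (0 : ℝ) 1 ∧
        (1 + α) * q₀ ^ 2 - q₀ * α * (1 - α) - α ^ 2 = 0) ∧
      (∀ q' : ℝ, q' ∈ Set.Ioo (0 : ℝ) 1 →
        (1 + α) * q' ^ 2 - q' * α * (1 - α) - α ^ 2 = 0 → q' = q₀) ∧
      α / (1 + α) < q₀ := by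
  have h1 : (0:ℝ) < 1 + α := by linarith
  constructor
  · rintro q ⟨hq0, hq1⟩
    constructor
    · intro h
      rw [div_eq_one_iff_eq (ne_of_gt hq0)] at h
      rw [eq_div_iff (ne_of_gt h1)]
      linarith
    · intro h
      subst h
      rw [div_eq_one_iff_eq (by positivity)]
      field_simp
      ring
  · set s := Real.sqrt ((α+1)^2+4) with hs
    have hs2 : s^2 = (α+1)^2+4 := Real.sq_sqrt (by positivity)
    have hspos : 0 < s := Real.sqrt_pos.mpr (by positivity)
    have hsgt : 1 + α < s := by nlinarith
    set q₀ : ℝ := α*((1-α)+s)/(2*(1+α)) with hq₀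
    have hq0pos : 0 < q₀ := by
      apply div_pos
      · nlinarith
      · linarith
    have hq0lt : q₀ < 1 := by
      rw [hq₀, div_lt_one (by linarith)]
      nlinarith
    have hfq0 : (1 + α) * q₀ ^ 2 - q₀ * α * (1 - α) - α ^ 2 = 0 := by
      rw [hq₀]
      field_simp
      linear_combination (α^2) * hs2
    have hgt : α / (1 + α) < q₀ := by
      rw [hq₀, div_lt_div_iff₀ h1 (by linarith)]
      nlinarith
    refine ⟨q₀, ⟨⟨hq0pos, hq0lt⟩, hfq0⟩, ?_, hgt⟩
    rintro q' ⟨hq'0, hq'1⟩ hf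
    have key : (q' - q₀) * ((1+α)*(q'+q₀) - α*(1-α)) = 0 := by
      linear_combination hf - hfq0
    have hfac : (1+α)*(q'+q₀) - α*(1-α) > 0 := by
      have : α < (1+α) * q₀ := by
        rw [div_lt_iff₀ h1] at hgt
        linarith [hgt]
      nlinarith
    have := mul_eq_zero.mp key
    rcases this with h | h
    · linarith
    · linarith
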